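/- Let δ > 0 and β(t) = e^{-δt}. For any φ ∈ L²(0, t*) with t* > 0, the double integral ∫₀^{t*} ∫₀^{t} β(t−s) φ(s) φ(t) ds dt is nonnegative. -/

import Mathlib

open MeasureTheory intervalIntegral

open Real Set in
private lemma aux_exp_integral (b m : ℝ) (hb : 0 < b) :
    ∫ u in Set.Ioi m, b * Real.exp (-b * u) = Real.exp (-b * m) := by
  have hderiv : ∀ x ∈ Ici m, HasDerivAt (fun u => -Real.exp (-b * u))
      (b * Real.exp (-b * x)) x := by
    intro x _
    have h1 : HasDerivAt (fun u : ℝ => -b * u) (-b) x := by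
      simpa using (hasDerivAt_id x).const_mul (-b)
    have h2 := (h1.exp).neg
    exact h2.congr_deriv (by ring)
  have hint : IntegrableOn (fun u => b * Real.exp (-b * u)) (Ioi m) :=
    (exp_neg_integrableOn_Ioi m hb).const_mul b
  have htend : Filter.Tendsto (fun u => -Real.exp (-b * u)) Filter.atTop (nhds 0) := by
    have h1 : Filter.Tendsto (fun u : ℝ => b * u) Filter.atTop Filter.atTop :=
      Filter.Tendsto.const_mul_atTop hb Filter.tendsto_id
    have h2 : Filter.Tendsto (fun u : ℝ => Real.exp (-(b * u))) Filter.atTop (nhds 0) :=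
      Real.tendsto_exp_neg_atTop_nhds_zero.comp h1
    have h3 := h2.neg
    simp only [neg_mul] at *
    simpa using h3
  have := integral_Ioi_of_hasDerivAt_of_tendsto' hderiv hint htend
  rw [this]; ring

theorem double_integral_exp_kernel_nonneg
    (δ : ℝ) (hδ : 0 < δ) (tstar : ℝ) (htstar : 0 < tstar)
    (φ : ℝ → ℝ)
    (hφ : MemLp φ 2 (volume.restrict (Set.Ioc (0:ℝ) tstar))) :
    0 ≤ ∫ t in (0:ℝ)..tstar, ∫ s in (0:ℝ)..t,
        Real.exp (-δ * (t - s)) * φ s * φ t := by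
  classical
  set μ := volume.restrict (Set.Ioc (0:ℝ) tstar) with hμdef
  haveI : IsFiniteMeasure μ := ⟨by
    rw [hμdef, Measure.restrict_apply_univ]
    exact measure_Ioc_lt_top⟩
  obtain ⟨ψ, hψm, hψae⟩ : ∃ ψ : ℝ → ℝ, StronglyMeasurable ψ ∧ φ =ᵐ[μ] ψ :=
    ⟨hφ.1.mk φ, hφ.1.stronglyMeasurable_mk, hφ.1.ae_eq_mk⟩
  have hψmeas : Measurable ψ := hψm.measurable
  have hφint : Integrable φ μ := hφ.integrable one_le_two
  have hψint : Integrable ψ μ := hφint.congr hψae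
  -- the weighted function f
  set f : ℝ → ℝ := fun s => Real.exp (δ * s) * ψ s with hfdef
  have hfm : Measurable f :=
    (Real.measurable_exp.comp (measurable_const.mul measurable_id)).mul hψmeas
  have hfint : Integrable f μ := by
    refine Integrable.mono' (hψint.abs.const_mul (Real.exp (δ * tstar)))
      hfm.aestronglyMeasurable ?_
    have := ae_restrict_mem (μ := volume) (measurableSet_Ioc (a := (0:ℝ)) (b := tstar))
    rw [← hμdef] at this
    filter_upwards [this] with s hs
    have h1 : Real.exp (δ * s) ≤ Real.exp (δ * tstar) :=
      Real.exp_le_exp.2 (by nlinarith [hs.2])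
    have h2 : (0:ℝ) ≤ |ψ s| := abs_nonneg _
    calc ‖Real.exp (δ * s) * ψ s‖ = Real.exp (δ * s) * |ψ s| := by
          rw [Real.norm_eq_abs, abs_mul, abs_of_pos (Real.exp_pos _)]
      _ ≤ Real.exp (δ * tstar) * |ψ s| := by nlinarith
  -- the one-sided kernel G on the product space
  set G : ℝ × ℝ → ℝ := fun p =>
    f p.1 * f p.2 * (if p.1 ≤ p.2 then Real.exp (-(2*δ) * p.2) else 0) with hGdef
  have hGm : Measurable G := by
    refine ((hfm.comp measurable_fst).mul (hfm.comp measurable_snd)).mul ?_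
    exact Measurable.ite (measurableSet_le measurable_fst measurable_snd)
      ((Real.measurable_exp.comp (measurable_const.mul measurable_snd))) measurable_const
  -- a.e. membership on the product
  have hprodae : ∀ᵐ p ∂(μ.prod μ), p ∈ Set.Ioc (0:ℝ) tstar ×ˢ Set.Ioc (0:ℝ) tstar := by
    rw [hμdef, Measure.prod_restrict]
    exact ae_restrict_mem (measurableSet_Ioc.prod measurableSet_Ioc)
  have habs : Integrable (fun p : ℝ × ℝ => |f p.1| * |f p.2|) (μ.prod μ) :=
    Integrable.mul_prod hfint.abs hfint.abs
  have hGint : Integrable G (μ.prod μ) := by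
    refine Integrable.mono' habs hGm.aestronglyMeasurable ?_
    filter_upwards [hprodae] with p hp
    rw [hGdef]
    simp only
    split_ifs with h
    · have he : Real.exp (-(2*δ) * p.2) ≤ 1 := by
        rw [Real.exp_le_one_iff]
        nlinarith [hp.2.1]
      have he0 : (0:ℝ) < Real.exp (-(2*δ) * p.2) := Real.exp_pos _
      rw [Real.norm_eq_abs, abs_mul, abs_mul, abs_of_pos he0]
      nlinarith [abs_nonneg (f p.1), abs_nonneg (f p.2), mul_nonneg (abs_nonneg (f p.1)) (abs_nonneg (f p.2))]
    · simp [mul_nonneg (abs_nonneg (f p.1)) (abs_nonneg (f p.2))]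
  -- Step 1 : the LHS equals ∫ G over the product measure
  have hstep1 : (∫ t in (0:ℝ)..tstar, ∫ s in (0:ℝ)..t,
      Real.exp (-δ * (t - s)) * φ s * φ t)
      = ∫ p, G p ∂(μ.prod μ) := by
    rw [intervalIntegral.integral_of_le htstar.le]
    rw [MeasureTheory.integral_prod_symm G hGint]
    rw [← hμdef]
    refine integral_congr_ae ?_
    have hmem := ae_restrict_mem (μ := volume) (measurableSet_Ioc (a := (0:ℝ)) (b := tstar))
    rw [← hμdef] at hmem
    filter_upwards [hmem, hψae] with t ht hφt
    -- inner integral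
    rw [intervalIntegral.integral_of_le ht.1.le]
    have hsub : Set.Ioc (0:ℝ) t ⊆ Set.Ioc (0:ℝ) tstar := Set.Ioc_subset_Ioc_right ht.2
    have hψae' : φ =ᵐ[volume.restrict (Set.Ioc (0:ℝ) t)] ψ := by
      rw [hμdef] at hψae
      exact ae_restrict_of_ae_restrict_of_subset hsub hψae
    have h1 : (∫ s in Set.Ioc (0:ℝ) t, Real.exp (-δ * (t - s)) * φ s * φ t)
        = ∫ s in Set.Ioc (0:ℝ) t, G (s, t) := by
      refine integral_congr_ae ?_
      filter_upwards [hψae', ae_restrict_mem measurableSet_Ioc] with s hφs hsmem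
      rw [hGdef]
      simp only [if_pos hsmem.2]
      rw [hφs, hφt]
      have : Real.exp (δ * s) * Real.exp (δ * t) * Real.exp (-(2*δ) * t)
          = Real.exp (-δ * (t - s)) := by
        rw [← Real.exp_add, ← Real.exp_add]
        congr 1; ring
      rw [← this]; ring
    -- extend the integration set from Ioc 0 t to Ioc 0 tstar
    have h2 : (fun s => G (s, t)) = (Set.Iic t).indicator
        (fun s => f s * f t * Real.exp (-(2*δ) * t)) := by
      funext s
      rw [hGdef, Set.indicator_apply]
      simp only [Set.mem_Iic]
      split_ifs with h
      · ring
      · ring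
    have hset : Set.Iic t ∩ Set.Ioc (0:ℝ) tstar = Set.Ioc (0:ℝ) t := by
      ext x
      simp only [Set.mem_inter_iff, Set.mem_Iic, Set.mem_Ioc]
      constructor
      · rintro ⟨hx1, hx2, _⟩; exact ⟨hx2, hx1⟩
      · rintro ⟨hx1, hx2⟩; exact ⟨hx2, hx1, hx2.trans ht.2⟩
    have h3 : ∫ s, G (s, t) ∂μ = ∫ s in Set.Ioc (0:ℝ) t, G (s, t) := by
      rw [hμdef, h2, MeasureTheory.integral_indicator measurableSet_Iic,
        Measure.restrict_restrict measurableSet_Iic, hset]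
      refine setIntegral_congr_fun measurableSet_Ioc (fun s hs => ?_)
      rw [Set.indicator_of_mem (Set.mem_Iic.2 hs.2)]
    rw [h1, h3]
  -- Step 2 : symmetrization. The diagonal is null.
  have hdiagnull : (μ.prod μ) {p : ℝ × ℝ | p.1 = p.2} = 0 := by
    have hD : MeasurableSet {p : ℝ × ℝ | p.1 = p.2} :=
      measurableSet_eq_fun measurable_fst measurable_snd
    rw [Measure.prod_apply hD]
    have : ∀ x : ℝ, μ (Prod.mk x ⁻¹' {p : ℝ × ℝ | p.1 = p.2}) = 0 := by
      intro x
      have hpre : Prod.mk x ⁻¹' {p : ℝ × ℝ | p.1 = p.2} = {x} := by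
        ext y; simp [eq_comm]
      rw [hpre, hμdef, Measure.restrict_apply (measurableSet_singleton x)]
      exact measure_mono_null Set.inter_subset_left Real.volume_singleton
    simp [this]
  have hdiag : ∀ᵐ p ∂(μ.prod μ), p.1 ≠ p.2 := by
    rw [MeasureTheory.ae_iff]
    simpa using hdiagnull
  -- the symmetric kernel K
  set K : ℝ × ℝ → ℝ := fun p =>
    f p.1 * f p.2 * Real.exp (-(2*δ) * max p.1 p.2) with hKdef
  have hsym : ∀ᵐ p ∂(μ.prod μ), G p + G p.swap = K p := by
    filter_upwards [hdiag] with p hp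
    rw [hGdef, hKdef]
    rcases lt_or_gt_of_ne hp with h | h
    · simp only [Prod.fst_swap, Prod.snd_swap, if_pos h.le, if_neg (not_le.2 h),
        max_eq_right h.le]
      ring
    · simp only [Prod.fst_swap, Prod.snd_swap, if_neg (not_le.2 h), if_pos h.le,
        max_eq_left h.le]
      ring
  have hstep2 : (2:ℝ) * (∫ p, G p ∂(μ.prod μ)) = ∫ p, K p ∂(μ.prod μ) := by
    have hswapint : Integrable (fun p : ℝ × ℝ => G p.swap) (μ.prod μ) := hGint.swap
    have h1 : ∫ p, G p.swap ∂(μ.prod μ) = ∫ p, G p ∂(μ.prod μ) :=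
      MeasureTheory.integral_prod_swap G
    have h2 : ∫ p, (G p + G p.swap) ∂(μ.prod μ)
        = ∫ p, G p ∂(μ.prod μ) + ∫ p, G p.swap ∂(μ.prod μ) :=
      integral_add hGint hswapint
    rw [← integral_congr_ae hsym, h2, h1]; ring
  -- Step 3 : the kernel identity via an integral in u
  set W : ℝ × ℝ → ℝ → ℝ := fun p u =>
    if max p.1 p.2 ≤ u then 2*δ*Real.exp (-(2*δ) * u) else 0 with hWdef
  have hWind : ∀ p : ℝ × ℝ, W p = (Set.Ici (max p.1 p.2)).indicator
      (fun u => 2*δ*Real.exp (-(2*δ) * u)) := by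
    intro p
    funext u
    rw [hWdef, Set.indicator_apply]
    simp [Set.mem_Ici]
  have hWint : ∀ p : ℝ × ℝ, Integrable (W p) volume := by
    intro p
    rw [hWind p]
    have h2δ : (0:ℝ) < 2*δ := by linarith
    have h1 : IntegrableOn (fun u : ℝ => Real.exp (-(2*δ) * u)) (Set.Ioi (max p.1 p.2)) :=
      exp_neg_integrableOn_Ioi _ h2δ
    have h2 : IntegrableOn (fun u : ℝ => 2*δ*Real.exp (-(2*δ) * u)) (Set.Ici (max p.1 p.2)) := by
      rw [integrableOn_Ici_iff_integrableOn_Ioi]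
      exact h1.const_mul _
    exact h2.integrable_indicator measurableSet_Ici
  have hWval : ∀ p : ℝ × ℝ, ∫ u, W p u = Real.exp (-(2*δ) * max p.1 p.2) := by
    intro p
    rw [hWind p, MeasureTheory.integral_indicator measurableSet_Ici,
      MeasureTheory.integral_Ici_eq_integral_Ioi]
    exact aux_exp_integral (2*δ) (max p.1 p.2) (by linarith)
  set Φ : ℝ × ℝ → ℝ → ℝ := fun p u => f p.1 * f p.2 * W p u with hΦdef
  have hKΦ : ∀ p : ℝ × ℝ, K p = ∫ u, Φ p u := by
    intro p
    show f p.1 * f p.2 * Real.exp (-(2*δ) * max p.1 p.2) = ∫ u, f p.1 * f p.2 * W p u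
    rw [MeasureTheory.integral_const_mul, hWval p]
  -- Step 4 : integrability of Φ on the triple product
  have hΦm : Measurable (Function.uncurry Φ) := by
    have hWm : Measurable (fun q : (ℝ × ℝ) × ℝ => W q.1 q.2) := by
      refine Measurable.ite (measurableSet_le
        ((measurable_fst.fst).max (measurable_fst.snd)) measurable_snd) ?_ measurable_const
      exact measurable_const.mul (Real.measurable_exp.comp (measurable_const.mul measurable_snd))
    exact ((hfm.comp (measurable_fst.fst)).mul (hfm.comp (measurable_fst.snd))).mul hWm
  have hΦnormint : ∀ p : ℝ × ℝ, ∫ u, ‖Φ p u‖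
      = |f p.1 * f p.2| * Real.exp (-(2*δ) * max p.1 p.2) := by
    intro p
    have hW0 : ∀ u, 0 ≤ W p u := by
      intro u
      rw [hWind p]
      exact Set.indicator_nonneg (fun x _ => by positivity) u
    have : (fun u => ‖Φ p u‖) = fun u => |f p.1 * f p.2| * W p u := by
      funext u
      show ‖f p.1 * f p.2 * W p u‖ = |f p.1 * f p.2| * W p u
      rw [Real.norm_eq_abs, abs_mul, abs_of_nonneg (hW0 u)]
    rw [this, MeasureTheory.integral_const_mul, hWval p]
  have hΦint : Integrable (Function.uncurry Φ) ((μ.prod μ).prod volume) := by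
    rw [MeasureTheory.integrable_prod_iff hΦm.aestronglyMeasurable]
    have hmeas2 : AEStronglyMeasurable
        (fun p : ℝ × ℝ => ∫ u, ‖Function.uncurry Φ (p, u)‖) (μ.prod μ) := by
      refine AEStronglyMeasurable.congr ?_ (Filter.Eventually.of_forall
        (fun p => (hΦnormint p).symm))
      refine Measurable.aestronglyMeasurable ?_
      exact ((hfm.comp measurable_fst).mul (hfm.comp measurable_snd)).abs.mul
        (Real.measurable_exp.comp
          (measurable_const.mul (measurable_fst.max measurable_snd)))
    refine ⟨Filter.Eventually.of_forall (fun p => ?_), Integrable.mono' habs hmeas2 ?_⟩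
    · show Integrable (fun u => f p.1 * f p.2 * W p u) volume
      exact ((hWint p).const_mul _)
    · filter_upwards [hprodae] with p hp
      have hint0 : (0:ℝ) ≤ ∫ u, ‖Function.uncurry Φ (p, u)‖ :=
        integral_nonneg (fun u => norm_nonneg _)
      rw [Real.norm_eq_abs, abs_of_nonneg hint0]
      have hnorm : (∫ u, ‖Function.uncurry Φ (p, u)‖)
          = |f p.1 * f p.2| * Real.exp (-(2*δ) * max p.1 p.2) := hΦnormint p
      rw [hnorm]
      have hmax : (0:ℝ) < max p.1 p.2 := lt_max_of_lt_left hp.1.1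
      have he : Real.exp (-(2*δ) * max p.1 p.2) ≤ 1 := by
        rw [Real.exp_le_one_iff]; nlinarith
      rw [abs_mul]
      nlinarith [abs_nonneg (f p.1), abs_nonneg (f p.2),
        mul_nonneg (abs_nonneg (f p.1)) (abs_nonneg (f p.2)),
        Real.exp_pos (-(2*δ) * max p.1 p.2)]
  -- Step 5 : swap and conclude nonnegativity
  have hswap : ∫ p, (∫ u, Φ p u) ∂(μ.prod μ) = ∫ u, ∫ p, Φ p u ∂(μ.prod μ) :=
    MeasureTheory.integral_integral_swap hΦint
  set r : ℝ → ℝ → ℝ := fun u s => if s ≤ u then f s else 0 with hrdef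
  have hinner : ∀ u : ℝ, ∫ p, Φ p u ∂(μ.prod μ)
      = (∫ s, r u s ∂μ) * (∫ s, r u s ∂μ) * (2*δ*Real.exp (-(2*δ) * u)) := by
    intro u
    have h1 : (fun p : ℝ × ℝ => Φ p u)
        = fun p : ℝ × ℝ => (fun p : ℝ × ℝ => r u p.1 * r u p.2) p * (2*δ*Real.exp (-(2*δ) * u)) := by
      funext p
      show f p.1 * f p.2 * W p u
          = (if p.1 ≤ u then f p.1 else 0) * (if p.2 ≤ u then f p.2 else 0)
            * (2*δ*Real.exp (-(2*δ) * u))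
      have hWeq : W p u = if max p.1 p.2 ≤ u then 2*δ*Real.exp (-(2*δ) * u) else 0 := rfl
      rw [hWeq]
      by_cases h1 : p.1 ≤ u <;> by_cases h2 : p.2 ≤ u <;>
        simp only [max_le_iff, h1, h2, and_true, true_and, and_false, false_and,
          if_true, if_false] <;> ring
    rw [h1, MeasureTheory.integral_mul_const, MeasureTheory.integral_prod_mul]
  have hnonneg : 0 ≤ ∫ u, ∫ p, Φ p u ∂(μ.prod μ) := by
    refine integral_nonneg (fun u => ?_)
    simp only [Pi.zero_apply]
    rw [hinner u]
    have : (0:ℝ) ≤ 2*δ*Real.exp (-(2*δ) * u) := by positivity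
    nlinarith [mul_self_nonneg (∫ s, r u s ∂μ)]
  -- put everything together
  have hfinal : (2:ℝ) * (∫ p, G p ∂(μ.prod μ)) = ∫ u, ∫ p, Φ p u ∂(μ.prod μ) := by
    rw [hstep2, ← hswap]
    exact integral_congr_ae (Filter.Eventually.of_forall hKΦ)
  rw [hstep1]
  nlinarith [hfinal, hnonneg]
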